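/- Let d ≥ 2 be an integer. A subset B ⊆ ℤ^d contains a set of return times of a minimal distal ℤ^d-system with the unique closing parallelepiped property if and only if B contains a d-joining of sets B₁,…,B_d ⊆ ℤ^{d−1}, where each B_i is a set of return times of a minimal distal ℤ^{d−1}-system. -/

import Mathlib

open Function Set

/-- The group of self-homeomorphisms of a topological space, under composition. -/
instance homeomorphGroup {X : Type*} [TopologicalSpace X] : Group (X ≃ₜ X) where
  mul f g := g.trans f
  one := Homeomorph.refl X
  inv := Homeomorph.symm
  mul_assoc _ _ _ := rfl
  one_mul _ := Homeomorph.ext fun _ => rfl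
  mul_one _ := Homeomorph.ext fun _ => rfl
  inv_mul_cancel f := Homeomorph.self_trans_symm f

variable {d : ℕ}

/-- The homeomorphism `T₁^{n₁ε₁} ⋯ T_d^{n_dε_d}` associated with `n ∈ ℤ^d` and a vertex
`ε ∈ {0,1}^d` of the cube. -/
def cubeMap {X : Type*} [TopologicalSpace X] (T : Fin d → X ≃ₜ X)
    (n : Fin d → ℤ) (ε : Fin d → Bool) : X ≃ₜ X :=
  ((List.finRange d).map (fun i => T i ^ (if ε i then n i else 0))).prod

/-- The space of directional dynamical cubes `Q_{T₁,…,T_d}(X)`. -/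
def cubes {X : Type*} [TopologicalSpace X] (T : Fin d → X ≃ₜ X) :
    Set ((Fin d → Bool) → X) :=
  closure {y | ∃ (x : X) (n : Fin d → ℤ), ∀ ε, y ε = cubeMap T n ε x}

/-- The group of homeomorphisms generated by `T₁,…,T_d`. -/
def genGroup {X : Type*} [TopologicalSpace X] (T : Fin d → X ≃ₜ X) : Subgroup (X ≃ₜ X) :=
  Subgroup.closure (Set.range T)

/-- Minimality: every orbit is dense. -/
def IsMinimalSystem {X : Type*} [TopologicalSpace X] (T : Fin d → X ≃ₜ X) : Prop :=
  ∀ x : X, Dense {y : X | ∃ g ∈ genGroup T, g x = y}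

/-- Distality: `inf_{g ∈ G} dist (g x) (g y) > 0` whenever `x ≠ y`. -/
def IsDistalSystem {X : Type*} [MetricSpace X] (T : Fin d → X ≃ₜ X) : Prop :=
  ∀ x y : X, x ≠ y → ∃ δ > 0, ∀ g ∈ genGroup T, δ ≤ dist (g x) (g y)

/-- Unique closing parallelepiped property: two cubes agreeing in `2^d - 1` of their
coordinates are equal. -/
def HasUCP {X : Type*} [TopologicalSpace X] (T : Fin d → X ≃ₜ X) : Prop :=
  ∀ x ∈ cubes T, ∀ y ∈ cubes T,
    ∀ ε₀ : Fin d → Bool, (∀ ε, ε ≠ ε₀ → x ε = y ε) → x = y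

/-- A `ℤ^d`-system: a compact metric space together with `d` pairwise commuting
homeomorphisms. -/
structure ZdSys (d : ℕ) where
  X : Type
  [ms : MetricSpace X]
  [cs : CompactSpace X]
  T : Fin d → X ≃ₜ X
  comm : ∀ i j : Fin d, ∀ x : X, T i (T j x) = T j (T i x)

attribute [instance] ZdSys.ms ZdSys.cs

/-- The set of return times `N_{T₁,…,T_d}(x,U) = {n ∈ ℤ^d : T₁^{n₁}⋯T_d^{n_d} x ∈ U}`. -/
def returnTimes {d : ℕ} (S : ZdSys d) (x : S.X) (U : Set S.X) : Set (Fin d → ℤ) :=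
  {n | cubeMap S.T n (fun _ => true) x ∈ U}


lemma homeo_mul_apply' {X : Type*} [TopologicalSpace X] (f g : X ≃ₜ X) (x : X) : (f * g) x = f (g x) := rfl

set_option linter.unusedSectionVars false

section Basics

variable {X Y : Type*} [TopologicalSpace X] [TopologicalSpace Y]

lemma homeo_mul_apply (f g : X ≃ₜ X) (x : X) : (f * g) x = f (g x) := rfl

lemma homeo_one_apply (x : X) : (1 : X ≃ₜ X) x = x := rfl

lemma homeo_inv_apply (f : X ≃ₜ X) (x : X) : (f⁻¹) x = f.symm x := rfl

/-- Conjugation of a homeomorphism power along an equivariant map. -/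
lemma zpow_conj (φ : X → Y) (f : X ≃ₜ X) (f' : Y ≃ₜ Y)
    (h : ∀ x, φ (f x) = f' (φ x)) : ∀ (m : ℤ) (x : X), φ ((f ^ m) x) = (f' ^ m) (φ x) := by
  have hnat : ∀ (m : ℕ) (x : X), φ ((f ^ m) x) = (f' ^ m) (φ x) := by
    intro m
    induction m with
    | zero => intro x; simp [homeo_one_apply]
    | succ k ih =>
      intro x
      have h1 : f ^ (k+1) = (f ^ k) * f := pow_succ f k
      have h2 : f' ^ (k+1) = (f' ^ k) * f' := pow_succ f' k
      rw [h1, h2, homeo_mul_apply, homeo_mul_apply, ← h x, ih]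
  have hinv : ∀ x, φ (f.symm x) = f'.symm (φ x) := by
    intro x
    have := h (f.symm x)
    rw [Homeomorph.apply_symm_apply] at this
    apply f'.injective
    rw [Homeomorph.apply_symm_apply]
    exact this.symm
  intro m x
  rcases m with m | m
  · simpa using hnat m x
  · -- negSucc
    have h1 : f ^ (Int.negSucc m) = (f ^ (m+1) : X ≃ₜ X)⁻¹ := zpow_negSucc f m
    have h2 : f' ^ (Int.negSucc m) = (f' ^ (m+1) : Y ≃ₜ Y)⁻¹ := zpow_negSucc f' m
    rw [h1, h2, homeo_inv_apply, homeo_inv_apply]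
    -- need: φ ((f^(m+1)).symm x) = (f'^(m+1)).symm (φ x)
    have hm : ∀ x, φ ((f ^ (m+1)) x) = (f' ^ (m+1)) (φ x) := hnat (m+1)
    have := hm ((f ^ (m+1)).symm x)
    rw [Homeomorph.apply_symm_apply] at this
    apply (f' ^ (m+1)).injective
    rw [Homeomorph.apply_symm_apply]
    exact this.symm

lemma listProd_apply_conj (φ : X → Y) (T : Fin d → X ≃ₜ X) (T' : Fin d → Y ≃ₜ Y)
    (c : Fin d → ℤ) (h : ∀ j x, φ (T j x) = T' j (φ x)) :
    ∀ (l : List (Fin d)) (x : X),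
      φ (((l.map fun i => T i ^ c i).prod) x) = ((l.map fun i => T' i ^ c i).prod) (φ x) := by
  intro l
  induction l with
  | nil => intro x; simp [homeo_one_apply]
  | cons a l ih =>
    intro x
    rw [List.map_cons, List.map_cons, List.prod_cons, List.prod_cons,
      homeo_mul_apply, homeo_mul_apply, zpow_conj φ (T a) (T' a) (h a), ih]

lemma cubeMap_conj (φ : X → Y) (T : Fin d → X ≃ₜ X) (T' : Fin d → Y ≃ₜ Y)
    (h : ∀ j x, φ (T j x) = T' j (φ x)) (n : Fin d → ℤ) (ε : Fin d → Bool) (x : X) :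
    φ (cubeMap T n ε x) = cubeMap T' n ε (φ x) :=
  listProd_apply_conj φ T T' _ h _ x

lemma cubeMap_zero (T : Fin d → X ≃ₜ X) (ε : Fin d → Bool) (x : X) :
    cubeMap T 0 ε x = x := by
  have : cubeMap T 0 ε = 1 := by
    apply List.prod_eq_one
    intro f hf
    simp only [List.mem_map] at hf
    obtain ⟨i, -, rfl⟩ := hf
    simp
  rw [this, homeo_one_apply]

lemma cubeMap_congr {T : Fin d → X ≃ₜ X} {n : Fin d → ℤ} {ε ε' : Fin d → Bool}
    (h : ∀ j, T j ^ (if ε j then n j else 0) = T j ^ (if ε' j then n j else 0)) :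
    cubeMap T n ε = cubeMap T n ε' := by
  unfold cubeMap
  congr 1
  exact List.map_congr_left (fun j _ => h j)

/-- Removing an identity factor: product over `Fin (k+1)` versus over `Fin k` via
`succAbove`. -/
lemma listProd_succAbove {M : Type*} [Monoid M] :
    ∀ (k : ℕ) (i : Fin (k+1)) (h : Fin (k+1) → M), h i = 1 →
      ((List.finRange (k+1)).map h).prod = ((List.finRange k).map (h ∘ i.succAbove)).prod := by
  intro k
  induction k with
  | zero =>
    intro i h h1
    have hi : i = 0 := Fin.fin_one_eq_zero i
    subst hi
    simp [List.finRange_succ, h1]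
  | succ k ih =>
    intro i h h1
    rcases Fin.eq_zero_or_eq_succ i with hi | ⟨j, hj⟩
    · subst hi
      rw [List.finRange_succ, List.map_cons, List.prod_cons, h1, one_mul,
        List.map_map]
      congr 1
    · subst hj
      rw [List.finRange_succ, List.map_cons, List.prod_cons, List.map_map]
      have h1' : (h ∘ Fin.succ) j = 1 := h1
      rw [ih j (h ∘ Fin.succ) h1']
      -- RHS
      rw [List.finRange_succ, List.map_cons, List.prod_cons, List.map_map]
      have e0 : (h ∘ j.succ.succAbove) 0 = h 0 := by
        simp [Function.comp, Fin.succ_succAbove_zero]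
      rw [e0]
      congr 1
      congr 1
      apply List.map_congr_left
      intro a _
      simp only [Function.comp_apply]
      rw [Fin.succ_succAbove_succ]

lemma cubeMap_succAbove {X : Type*} [TopologicalSpace X] {k : ℕ} (T : Fin (k+1) → X ≃ₜ X)
    (n : Fin (k+1) → ℤ) (ε : Fin (k+1) → Bool) (i : Fin (k+1)) (hi : ε i = false) :
    cubeMap T n ε = cubeMap (T ∘ i.succAbove) (n ∘ i.succAbove) (ε ∘ i.succAbove) := by
  unfold cubeMap
  rw [listProd_succAbove k i _ (by simp [hi])]
  congr 1

lemma cubeMap_succAbove' {X : Type*} [TopologicalSpace X] {k : ℕ} (T : Fin (k+1) → X ≃ₜ X)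
    (n : Fin (k+1) → ℤ) (ε : Fin (k+1) → Bool) (i : Fin (k+1)) (hi : T i = 1) :
    cubeMap T n ε = cubeMap (T ∘ i.succAbove) (n ∘ i.succAbove) (ε ∘ i.succAbove) := by
  unfold cubeMap
  rw [listProd_succAbove k i _ (by rw [hi]; exact one_zpow _)]
  congr 1

lemma if_homeo_zpow {X : Type*} [TopologicalSpace X] (c : Bool) (t : X ≃ₜ X) (m : ℤ) :
    (if c then t else 1) ^ m = t ^ (if c then m else 0) := by
  cases c <;> simp


section Ellis

variable {X : Type*} [MetricSpace X] [CompactSpace X] {k : ℕ} (T : Fin k → X ≃ₜ X)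

/-- The `G`-orbit of a point. -/
def orbitSet (x : X) : Set X := {y : X | ∃ g ∈ genGroup T, g x = y}

/-- The underlying set of coercions of elements of the acting group. -/
def genSet : Set (X → X) := (fun g : X ≃ₜ X => ⇑g) '' ((genGroup T : Subgroup (X ≃ₜ X)) : Set (X ≃ₜ X))

/-- The Ellis semigroup: closure of the acting group in `X → X`. -/
def ellis : Set (X → X) := closure (genSet T)

lemma id_mem_ellis : id ∈ ellis T :=
  subset_closure ⟨1, one_mem _, rfl⟩

lemma isClosed_ellis : IsClosed (ellis T) := isClosed_closure

lemma isCompact_ellis : IsCompact (ellis T) := (isClosed_ellis T).isCompact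

lemma ellis_comp {p q : X → X} (hp : p ∈ ellis T) (hq : q ∈ ellis T) : p ∘ q ∈ ellis T := by
  have step1 : ∀ g ∈ genGroup T, ∀ r ∈ ellis T, ⇑g ∘ r ∈ ellis T := by
    intro g hg r hr
    have hc : Continuous (fun f : X → X => ⇑g ∘ f) :=
      continuous_pi fun z => g.continuous.comp (continuous_apply z)
    have h1 : (fun f : X → X => ⇑g ∘ f) '' genSet T ⊆ genSet T := by
      rintro - ⟨-, ⟨h, hh, rfl⟩, rfl⟩
      exact ⟨g * h, mul_mem hg hh, rfl⟩
    have h2 : ⇑g ∘ r ∈ (fun f : X → X => ⇑g ∘ f) '' closure (genSet T) := ⟨r, hr, rfl⟩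
    exact (closure_mono h1) ((image_closure_subset_closure_image hc) h2)
  have hc : Continuous (fun f : X → X => f ∘ q) :=
    continuous_pi fun z => continuous_apply (q z)
  have h1 : (fun f : X → X => f ∘ q) '' genSet T ⊆ ellis T := by
    rintro - ⟨-, ⟨h, hh, rfl⟩, rfl⟩
    exact step1 h hh q hq
  have h2 : p ∘ q ∈ (fun f : X → X => f ∘ q) '' closure (genSet T) := ⟨p, hp, rfl⟩
  exact ((isClosed_ellis T).closure_subset_iff.mpr h1) ((image_closure_subset_closure_image hc) h2)

lemma closure_orbit_eq (x : X) :
    closure (orbitSet T x) = (fun f : X → X => f x) '' ellis T := by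
  apply Subset.antisymm
  · apply closure_minimal
    · rintro - ⟨g, hg, rfl⟩
      exact ⟨⇑g, subset_closure ⟨g, hg, rfl⟩, rfl⟩
    · exact ((isCompact_ellis T).image (continuous_apply x)).isClosed
  · have h2 := image_closure_subset_closure_image (f := fun f : X → X => f x)
      (s := genSet T) (continuous_apply x)
    refine h2.trans (closure_mono ?_)
    rintro - ⟨-, ⟨g, hg, rfl⟩, rfl⟩
    exact ⟨g, hg, rfl⟩

lemma closure_orbit_invariant (x : X) {g : X ≃ₜ X} (hg : g ∈ genGroup T) :
    ∀ z ∈ closure (orbitSet T x), g z ∈ closure (orbitSet T x) := by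
  intro z hz
  have h1 : ⇑g '' orbitSet T x ⊆ orbitSet T x := by
    rintro - ⟨-, ⟨h, hh, rfl⟩, rfl⟩
    exact ⟨g * h, mul_mem hg hh, rfl⟩
  exact (closure_mono h1) ((image_closure_subset_closure_image g.continuous) ⟨z, hz, rfl⟩)

/-- The key consequence of distality: orbit closures are "symmetric", hence minimal. -/
theorem distal_key (hdist : IsDistalSystem T) (x y : X)
    (hy : y ∈ closure (orbitSet T x)) : x ∈ closure (orbitSet T y) := by
  rw [closure_orbit_eq] at hy
  obtain ⟨p, hp, hpx⟩ := hy
  set C : Set (X → X) := (fun f : X → X => f ∘ p) '' ellis T with hC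
  have hCsub : C ⊆ ellis T := by
    rintro - ⟨r, hr, rfl⟩
    exact ellis_comp T hr hp
  have hCmul : ∀ f ∈ ellis T, ∀ c ∈ C, f ∘ c ∈ C := by
    rintro f hf - ⟨r, hr, rfl⟩
    exact ⟨f ∘ r, ellis_comp T hf hr, rfl⟩
  have hCcomp : IsCompact C :=
    (isCompact_ellis T).image (continuous_pi fun z => continuous_apply (p z))
  have hCne : p ∈ C := ⟨id, id_mem_ellis T, by simp⟩
  haveI : Nonempty ↥C := ⟨⟨p, hCne⟩⟩
  haveI : CompactSpace ↥C := isCompact_iff_compactSpace.mp hCcomp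
  letI : Semigroup ↥C :=
    { mul := fun a b => ⟨(a : X → X) ∘ (b : X → X), hCmul _ (hCsub a.2) _ b.2⟩
      mul_assoc := fun _ _ _ => Subtype.ext rfl }
  have hcont : ∀ r : ↥C, Continuous (fun a : ↥C => a * r) := by
    intro r
    apply Continuous.subtype_mk
    exact continuous_pi fun z => (continuous_apply ((r : X → X) z)).comp continuous_subtype_val
  obtain ⟨u, hu⟩ := exists_idempotent_of_compact_t2_of_continuous_mul_left hcont
  have huu : (u : X → X) ∘ (u : X → X) = (u : X → X) := congrArg Subtype.val hu
  have huE : (u : X → X) ∈ ellis T := hCsub u.2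
  have hux : (u : X → X) x = x := by
    by_contra hne
    obtain ⟨δ, hδ, hg⟩ := hdist x ((u : X → X) x) (fun h => hne h.symm)
    have hcl : ellis T ⊆ {f : X → X | δ ≤ dist (f x) (f ((u : X → X) x))} := by
      apply closure_minimal
      · rintro - ⟨g, hg', rfl⟩
        exact hg g hg'
      · exact isClosed_le continuous_const
          ((continuous_apply x).dist (continuous_apply ((u : X → X) x)))
    have h3 := hcl huE
    simp only [mem_setOf_eq] at h3
    rw [show (u : X → X) ((u : X → X) x) = (u : X → X) x from congrFun huu x] at h3
    rw [dist_self] at h3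
    linarith
  obtain ⟨r, hr, hru⟩ := u.2
  rw [closure_orbit_eq]
  refine ⟨r, hr, ?_⟩
  show r y = x
  have h4 : r y = (r ∘ p) x := by rw [← hpx]; rfl
  have h5 : r ∘ p = (u : X → X) := hru
  rw [h4, h5]
  exact hux

end Ellis

section Subsystem

/-- Passing to the orbit closure of a point in a compact distal system yields a minimal
distal subsystem. -/
theorem subsystem {k : ℕ} {W : Type} [MetricSpace W] [CompactSpace W] (A : Fin k → W ≃ₜ W)
    (hcomm : ∀ j j' : Fin k, ∀ w : W, A j (A j' w) = A j' (A j w))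
    (hdist : IsDistalSystem A) (w₀ : W) :
    ∃ (S : ZdSys k) (x : S.X) (e : S.X → W), IsMinimalSystem S.T ∧ IsDistalSystem S.T ∧
      Continuous e ∧ Function.Injective e ∧ e x = w₀ ∧
      (∀ (j : Fin k) (y : S.X), e (S.T j y) = A j (e y)) := by
  classical
  set Y : Set W := closure (orbitSet A w₀) with hYdef
  have hYx : w₀ ∈ Y := subset_closure ⟨1, one_mem _, rfl⟩
  have hInv : ∀ g ∈ genGroup A, ∀ z ∈ Y, g z ∈ Y := fun g hg z hz =>
    closure_orbit_invariant A w₀ hg z hz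
  have hYclosed : IsClosed Y := isClosed_closure
  haveI : CompactSpace ↥Y := isCompact_iff_compactSpace.mp hYclosed.isCompact
  have genmem : ∀ j, A j ∈ genGroup A := fun j => Subgroup.subset_closure (mem_range_self j)
  have hInvSymm : ∀ (j : Fin k), ∀ z ∈ Y, (A j).symm z ∈ Y := by
    intro j z hz
    exact hInv ((A j)⁻¹) (inv_mem (genmem j)) z hz
  set Tr : Fin k → (↥Y ≃ₜ ↥Y) := fun j =>
    { toFun := fun y => ⟨A j ↑y, hInv (A j) (genmem j) ↑y y.2⟩
      invFun := fun y => ⟨(A j).symm ↑y, hInvSymm j ↑y y.2⟩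
      left_inv := fun y => Subtype.ext ((A j).symm_apply_apply ↑y)
      right_inv := fun y => Subtype.ext ((A j).apply_symm_apply ↑y)
      continuous_toFun := Continuous.subtype_mk ((A j).continuous.comp continuous_subtype_val) _
      continuous_invFun :=
        Continuous.subtype_mk ((A j).symm.continuous.comp continuous_subtype_val) _ } with hTr
  have hTrApp : ∀ (j : Fin k) (y : ↥Y), ((Tr j y : W)) = A j ↑y := fun j y => rfl
  -- correspondence between the generated groups
  have corr_up : ∀ g ∈ genGroup Tr, ∃ h ∈ genGroup A, ∀ y : ↥Y, ((g y : W)) = h ↑y := by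
    intro g hg
    induction hg using Subgroup.closure_induction with
    | mem g' hg' =>
      obtain ⟨j, rfl⟩ := hg'
      exact ⟨A j, genmem j, fun y => rfl⟩
    | one => exact ⟨1, one_mem _, fun y => rfl⟩
    | mul g₁ g₂ hg₁ hg₂ ih₁ ih₂ =>
      obtain ⟨h₁, hh₁, e₁⟩ := ih₁
      obtain ⟨h₂, hh₂, e₂⟩ := ih₂
      refine ⟨h₁ * h₂, mul_mem hh₁ hh₂, fun y => ?_⟩
      rw [homeo_mul_apply', homeo_mul_apply', e₁, e₂]
    | inv g' hg' ih =>
      obtain ⟨h, hh, e⟩ := ih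
      refine ⟨h⁻¹, inv_mem hh, fun y => ?_⟩
      apply h.injective
      have h1 := e (g'⁻¹ y)
      have h2 : g' (g'⁻¹ y) = y := g'.apply_symm_apply y
      rw [h2] at h1
      rw [← h1]
      exact (h.apply_symm_apply _).symm
  have corr_down : ∀ h ∈ genGroup A, ∃ g ∈ genGroup Tr, ∀ y : ↥Y, h ↑y = ((g y : W)) := by
    intro h hh
    induction hh using Subgroup.closure_induction with
    | mem h' hh' =>
      obtain ⟨j, rfl⟩ := hh'
      exact ⟨Tr j, Subgroup.subset_closure (mem_range_self j), fun y => rfl⟩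
    | one => exact ⟨1, one_mem _, fun y => rfl⟩
    | mul h₁ h₂ hh₁ hh₂ ih₁ ih₂ =>
      obtain ⟨g₁, hg₁, e₁⟩ := ih₁
      obtain ⟨g₂, hg₂, e₂⟩ := ih₂
      refine ⟨g₁ * g₂, mul_mem hg₁ hg₂, fun y => ?_⟩
      rw [homeo_mul_apply', homeo_mul_apply', e₂ y, e₁ (g₂ y)]
    | inv h' hh' ih =>
      obtain ⟨g, hg, e⟩ := ih
      refine ⟨g⁻¹, inv_mem hg, fun y => ?_⟩
      apply h'.injective
      have h1 := e (g⁻¹ y)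
      have h2 : g (g⁻¹ y) = y := g.apply_symm_apply y
      rw [h2] at h1
      rw [← h1]
      exact (h'.apply_symm_apply _)
  refine ⟨{ X := ↥Y, T := Tr, comm := fun i j y => Subtype.ext (hcomm i j ↑y) },
    ⟨w₀, hYx⟩, Subtype.val, ?_, ?_, continuous_subtype_val, Subtype.val_injective, rfl,
    fun j y => rfl⟩
  · -- minimal
    intro y z
    rw [closure_subtype]
    have h1 : orbitSet A ↑y ⊆ Subtype.val '' {z : ↥Y | ∃ g ∈ genGroup Tr, g y = z} := by
      rintro - ⟨h, hh, rfl⟩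
      obtain ⟨g, hgmem, hge⟩ := corr_down h hh
      exact ⟨g y, ⟨g, hgmem, rfl⟩, (hge y).symm⟩
    have hw₀ : w₀ ∈ closure (orbitSet A ↑y) := distal_key A hdist w₀ ↑y y.2
    have h2 : Y ⊆ closure (orbitSet A ↑y) := by
      apply closure_minimal _ isClosed_closure
      rintro - ⟨g, hg, rfl⟩
      exact closure_orbit_invariant A (↑y) hg w₀ hw₀
    exact (closure_mono h1) (h2 z.2)
  · -- distal
    intro y z hne
    obtain ⟨δ, hδ, hb⟩ := hdist ↑y ↑z (fun h => hne (Subtype.ext h))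
    refine ⟨δ, hδ, fun g hg => ?_⟩
    obtain ⟨h, hh, he⟩ := corr_up g hg
    rw [Subtype.dist_eq, he y, he z]
    exact hb h hh

end Subsystem



section MasterSec

variable {k : ℕ} {ι : Type} [Fintype ι] {Z : ι → Type} [∀ κ, MetricSpace (Z κ)]
  [∀ κ, CompactSpace (Z κ)]

/-- The master construction: the orbit closure of a point in a product of systems, acted
upon coordinatewise, is a minimal distal system whose cube structure is controlled
coordinatewise. -/
theorem master (F : ∀ κ, Fin k → Z κ ≃ₜ Z κ)
    (hcomm : ∀ (κ : ι) (j j' : Fin k) (z : Z κ), F κ j (F κ j' z) = F κ j' (F κ j z))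
    (hdist : ∀ (κ : ι) (u v : Z κ), u ≠ v → ∃ δ > 0, ∀ h ∈ genGroup (F κ), δ ≤ dist (h u) (h v))
    (a₀ : ∀ κ, Z κ) :
    ∃ (S : ZdSys k) (x : S.X) (e : S.X → ∀ κ, Z κ),
      IsMinimalSystem S.T ∧ IsDistalSystem S.T ∧ Continuous e ∧ Function.Injective e ∧
      e x = a₀ ∧
      (∀ (n : Fin k → ℤ) (ε : Fin k → Bool) (y : S.X) (κ : ι),
        e (cubeMap S.T n ε y) κ = cubeMap (F κ) n ε (e y κ)) ∧
      (∀ q ∈ cubes S.T, ∀ (κ : ι) (ε ε' : Fin k → Bool),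
        (∀ j, ε j ≠ ε' j → F κ j = 1) → e (q ε) κ = e (q ε') κ) := by
  classical
  set A : Fin k → ((∀ κ, Z κ) ≃ₜ (∀ κ, Z κ)) :=
    fun j => Homeomorph.piCongrRight (fun κ => F κ j) with hA
  have hAapp : ∀ (j : Fin k) (a : ∀ κ, Z κ) (κ : ι), (A j a) κ = F κ j (a κ) := fun j a κ => rfl
  have hAcomm : ∀ (j j' : Fin k) (a : ∀ κ, Z κ), A j (A j' a) = A j' (A j a) := by
    intro j j' a
    funext κ
    rw [hAapp, hAapp, hAapp, hAapp, hcomm]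
  have proj : ∀ g ∈ genGroup A, ∀ κ, ∃ h ∈ genGroup (F κ), ∀ a, (g a) κ = h (a κ) := by
    intro g hg κ
    induction hg using Subgroup.closure_induction with
    | mem g' hg' =>
      obtain ⟨j, rfl⟩ := hg'
      exact ⟨F κ j, Subgroup.subset_closure (mem_range_self j), fun a => rfl⟩
    | one => exact ⟨1, one_mem _, fun a => rfl⟩
    | mul g₁ g₂ hg₁ hg₂ ih₁ ih₂ =>
      obtain ⟨h₁, hh₁, e₁⟩ := ih₁
      obtain ⟨h₂, hh₂, e₂⟩ := ih₂
      refine ⟨h₁ * h₂, mul_mem hh₁ hh₂, fun a => ?_⟩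
      rw [homeo_mul_apply', homeo_mul_apply']
      rw [show (g₁ (g₂ a)) κ = h₁ ((g₂ a) κ) from e₁ (g₂ a), e₂ a]
    | inv g' hg' ih =>
      obtain ⟨h, hh, e⟩ := ih
      refine ⟨h⁻¹, inv_mem hh, fun a => ?_⟩
      apply h.injective
      have h1 := e (g'⁻¹ a)
      have h2 : g' (g'⁻¹ a) = a := g'.apply_symm_apply a
      rw [h2] at h1
      rw [← h1]
      exact (h.apply_symm_apply _).symm
  have hAdist : IsDistalSystem A := by
    intro a b hne
    obtain ⟨κ, hκ⟩ := Function.ne_iff.mp hne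
    obtain ⟨δ, hδ, hb⟩ := hdist κ (a κ) (b κ) hκ
    refine ⟨δ, hδ, fun g hg => ?_⟩
    obtain ⟨h, hh, he⟩ := proj g hg κ
    calc δ ≤ dist (h (a κ)) (h (b κ)) := hb h hh
    _ = dist ((g a) κ) ((g b) κ) := by rw [he a, he b]
    _ ≤ dist (g a) (g b) := dist_le_pi_dist _ _ κ
  obtain ⟨S, x, e, hmin, hdistS, hcont, hinj, hex, hconj⟩ := subsystem A hAcomm hAdist a₀
  have hcube : ∀ (n : Fin k → ℤ) (ε : Fin k → Bool) (y : S.X) (κ : ι),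
      e (cubeMap S.T n ε y) κ = cubeMap (F κ) n ε (e y κ) := by
    intro n ε y κ
    exact cubeMap_conj (fun y => e y κ) S.T (F κ)
      (fun j z => by
        show e (S.T j z) κ = F κ j (e z κ)
        rw [hconj j z]
        exact hAapp j (e z) κ) n ε y
  refine ⟨S, x, e, hmin, hdistS, hcont, hinj, hex, hcube, ?_⟩
  intro q hq κ ε ε' hεε'
  have hCclosed : IsClosed {q : (Fin k → Bool) → S.X | e (q ε) κ = e (q ε') κ} := by
    apply isClosed_eq
    · exact (continuous_apply κ).comp (hcont.comp (continuous_apply ε))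
    · exact (continuous_apply κ).comp (hcont.comp (continuous_apply ε'))
  refine hCclosed.closure_subset_iff.mpr ?_ hq
  rintro q' ⟨y, n, hy⟩
  simp only [mem_setOf_eq]
  rw [hy ε, hy ε', hcube, hcube]
  have heq : cubeMap (F κ) n ε = cubeMap (F κ) n ε' := by
    apply cubeMap_congr
    intro j
    by_cases hj : ε j = ε' j
    · rw [hj]
    · rw [hεε' j hj, one_zpow, one_zpow]
  rw [heq]

end MasterSec


/-- **Theorem `thm:returntimes`.**  Let `d ≥ 2` (here `d+2` for a natural `d ≥ 0`).  A set
`B ⊆ ℤ^{d+2}` contains a set of return times of a minimal distal `ℤ^{d+2}`-system with the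
unique closing parallelepiped property iff `B` contains the `(d+2)`-joining of sets
`B₁,…,B_{d+2} ⊆ ℤ^{d+1}`, each of which is a set of return times of a minimal distal
`ℤ^{d+1}`-system. -/
theorem return_times_characterization {d : ℕ} (B : Set (Fin (d + 2) → ℤ)) :
    (∃ S : ZdSys (d + 2), IsMinimalSystem S.T ∧ IsDistalSystem S.T ∧ HasUCP S.T ∧
        ∃ (x : S.X) (U : Set S.X), IsOpen U ∧ x ∈ U ∧ returnTimes S x U ⊆ B) ↔
      ∃ Bi : Fin (d + 2) → Set (Fin (d + 1) → ℤ),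
        (∀ i : Fin (d + 2),
          ∃ S : ZdSys (d + 1), IsMinimalSystem S.T ∧ IsDistalSystem S.T ∧
            ∃ (x : S.X) (U : Set S.X), IsOpen U ∧ x ∈ U ∧ Bi i = returnTimes S x U) ∧
        {n : Fin (d + 2) → ℤ |
          ∀ i : Fin (d + 2), (fun l : Fin (d + 1) => n (i.succAbove l)) ∈ Bi i} ⊆ B := by
  classical
  constructor
  · -- Forward direction
    rintro ⟨S, hmin, hdist, hucp, x, U, hUopen, hxU, hret⟩
    -- Step 1: closing neighborhoods from UCP and compactness
    obtain ⟨V, hV, hclose⟩ : ∃ V : (Fin (d+2) → Bool) → Set S.X,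
        (∀ ε, IsOpen (V ε) ∧ x ∈ V ε) ∧
        (∀ q ∈ cubes S.T, (∀ ε, ε ≠ (fun _ => true) → q ε ∈ V ε) →
          q (fun _ => true) ∈ U) := by
      set one : Fin (d+2) → Bool := fun _ => true with hone
      set c₀ : (Fin (d+2) → Bool) → S.X := fun _ => x with hc₀
      have hc₀cube : c₀ ∈ cubes S.T :=
        subset_closure ⟨x, 0, fun ε => (cubeMap_zero S.T ε x).symm⟩
      set K : Set ((Fin (d+2) → Bool) → S.X) := cubes S.T ∩ {q | q one ∈ Uᶜ} with hK
      have hKclosed : IsClosed K :=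
        isClosed_closure.inter (hUopen.isClosed_compl.preimage (continuous_apply one))
      set L : Set ((Fin (d+2) → Bool) → S.X) :=
        (fun q => Function.update q one x) '' K with hL
      have hupd : Continuous (fun q : (Fin (d+2) → Bool) → S.X => Function.update q one x) := by
        apply continuous_pi
        intro ε
        by_cases h : ε = one
        · subst h
          simp only [Function.update_self]
          exact continuous_const
        · simp only [Function.update_of_ne h]
          exact continuous_apply ε
      have hLcomp : IsCompact L := hKclosed.isCompact.image hupd
      have hc₀L : c₀ ∉ L := by
        rintro ⟨q, ⟨hqcube, hqU⟩, hqe⟩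
        have hqeq : q = c₀ := by
          apply hucp q hqcube c₀ hc₀cube one
          intro ε hεne
          have h5 : Function.update q one x ε = c₀ ε := congrFun hqe ε
          rwa [Function.update_of_ne hεne] at h5
        rw [hqeq] at hqU
        exact hqU hxU
      obtain ⟨I, u, hIu, hIsub⟩ := isOpen_pi_iff.mp hLcomp.isClosed.isOpen_compl c₀ hc₀L
      refine ⟨fun ε => if ε ∈ I then u ε else univ, fun ε => ?_, ?_⟩
      · by_cases h : ε ∈ I
        · simp only [if_pos h]
          exact ⟨(hIu ε h).1, (hIu ε h).2⟩
        · simp only [if_neg h]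
          exact ⟨isOpen_univ, mem_univ x⟩
      · intro q hqcube hqV
        by_contra hqU
        have hmem : Function.update q one x ∈ (↑I : Set (Fin (d+2) → Bool)).pi u := by
          intro ε hε
          by_cases h : ε = one
          · subst h
            rw [Function.update_self]
            exact (hIu _ hε).2
          · rw [Function.update_of_ne h]
            have hεI : ε ∈ I := hε
            have h6 := hqV ε h
            simp only [if_pos hεI] at h6
            exact h6
        exact (hIsub hmem) ⟨q, ⟨hqcube, hqU⟩, rfl⟩
    -- Step 2: one minimal distal (d+1)-system per direction
    have key : ∀ i : Fin (d+2), ∃ (S' : ZdSys (d+1)) (x' : S'.X) (U' : Set S'.X),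
        IsMinimalSystem S'.T ∧ IsDistalSystem S'.T ∧ IsOpen U' ∧ x' ∈ U' ∧
        ∀ m : Fin (d+1) → ℤ, m ∈ returnTimes S' x' U' →
          ∀ ε : Fin (d+2) → Bool, ε i = false →
            cubeMap (S.T ∘ i.succAbove) m (ε ∘ i.succAbove) x ∈ V ε := by
      intro i
      set F : (Fin (d+2) → Bool) → Fin (d+1) → (S.X ≃ₜ S.X) := fun ε l =>
        if ε (i.succAbove l) then S.T (i.succAbove l) else 1 with hF
      have hFcomm : ∀ (ε : Fin (d+2) → Bool) (l l' : Fin (d+1)) (z : S.X),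
          F ε l (F ε l' z) = F ε l' (F ε l z) := by
        intro ε l l' z
        simp only [hF]
        split_ifs <;> first | rfl | exact S.comm _ _ z
      have hFdist : ∀ (ε : Fin (d+2) → Bool) (u v : S.X), u ≠ v →
          ∃ δ > 0, ∀ h ∈ genGroup (F ε), δ ≤ dist (h u) (h v) := by
        intro ε u v huv
        obtain ⟨δ, hδ, hb⟩ := hdist u v huv
        have hle : genGroup (F ε) ≤ genGroup S.T := by
          apply (Subgroup.closure_le _).mpr
          rintro - ⟨l, rfl⟩
          simp only [hF]
          by_cases h1 : ε (i.succAbove l)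
          · simp only [h1, if_true]
            exact Subgroup.subset_closure (mem_range_self _)
          · simp only [h1, if_false]
            exact one_mem _
        exact ⟨δ, hδ, fun h hh => hb h (hle hh)⟩
      obtain ⟨S', x', e, hmin', hdist', hcont', hinj', hex', hcube', hclause'⟩ :=
        master F hFcomm hFdist (fun _ => x)
      refine ⟨S', x', e ⁻¹' (Set.pi {ε : Fin (d+2) → Bool | ε i = false} (fun ε => V ε)),
        hmin', hdist', (isOpen_set_pi (Set.toFinite _) (fun ε _ => (hV ε).1)).preimage hcont',
        ?_, ?_⟩
      · rw [mem_preimage, hex']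
        intro ε _
        exact (hV ε).2
      · intro m hm ε hεi
        have h1 : e (cubeMap S'.T m (fun _ => true) x') ∈
            Set.pi {ε : Fin (d+2) → Bool | ε i = false} (fun ε => V ε) := hm
        have h2 := h1 ε hεi
        rw [hcube'] at h2
        rw [show e x' ε = x from congrFun hex' ε] at h2
        have h3 : cubeMap (F ε) m (fun _ => true) =
            cubeMap (S.T ∘ i.succAbove) m (ε ∘ i.succAbove) := by
          unfold cubeMap
          congr 1
          apply List.map_congr_left
          intro l _
          show F ε l ^ (if true then m l else 0) =
            S.T (i.succAbove l) ^ (if ε (i.succAbove l) then m l else 0)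
          rw [if_pos rfl]
          simp only [hF]
          rw [if_homeo_zpow]
        rwa [h3] at h2
    choose S' x' U' hmin' hdist' hUopen' hxmem' hkey using key
    refine ⟨fun i => returnTimes (S' i) (x' i) (U' i),
      fun i => ⟨S' i, hmin' i, hdist' i, x' i, U' i, hUopen' i, hxmem' i, rfl⟩, ?_⟩
    intro n hn
    apply hret
    show cubeMap S.T n (fun _ => true) x ∈ U
    have hqc : (fun ε => cubeMap S.T n ε x) ∈ cubes S.T := subset_closure ⟨x, n, fun ε => rfl⟩
    apply hclose _ hqc
    intro ε hεne
    have hfalse : ∃ i, ε i = false := by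
      by_contra hcon
      push_neg at hcon
      apply hεne
      funext j
      have := hcon j
      simp only [Bool.not_eq_false] at this
      rw [this]
    obtain ⟨i, hi⟩ := hfalse
    have h4 := hkey i (fun l => n (i.succAbove l)) (hn i) ε hi
    show cubeMap S.T n ε x ∈ V ε
    rw [cubeMap_succAbove S.T n ε i hi]
    exact h4
  · -- Backward direction
    rintro ⟨Bi, hBi, hjoin⟩
    choose S' hmin' hdist' x' U' hUopen' hxU' hBieq using hBi
    set F : ∀ i : Fin (d+2), Fin (d+2) → ((S' i).X ≃ₜ (S' i).X) :=
      fun i => i.insertNth 1 ((S' i).T) with hF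
    have hFsame : ∀ i, F i i = 1 := fun i => Fin.insertNth_apply_same i 1 _
    have hFsucc : ∀ i l, F i (i.succAbove l) = (S' i).T l :=
      fun i l => Fin.insertNth_apply_succAbove i 1 _ l
    have hFcases : ∀ i j, F i j = 1 ∨ ∃ l, F i j = (S' i).T l := by
      intro i j
      rcases eq_or_ne j i with h | h
      · left; rw [h, hFsame]
      · obtain ⟨l, hl⟩ := Fin.exists_succAbove_eq h
        right
        exact ⟨l, by rw [← hl, hFsucc]⟩
    have hFcomm : ∀ (i : Fin (d+2)) (j j' : Fin (d+2)) (z : (S' i).X),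
        F i j (F i j' z) = F i j' (F i j z) := by
      intro i j j' z
      rcases hFcases i j with h | ⟨l, h⟩ <;> rcases hFcases i j' with h' | ⟨l', h'⟩ <;>
          rw [h, h'] <;>
        first
          | rfl
          | exact (S' i).comm _ _ z
    have hFdist : ∀ (i : Fin (d+2)) (u v : (S' i).X), u ≠ v →
        ∃ δ > 0, ∀ h ∈ genGroup (F i), δ ≤ dist (h u) (h v) := by
      intro i u v huv
      obtain ⟨δ, hδ, hb⟩ := hdist' i u v huv
      have hle : genGroup (F i) ≤ genGroup ((S' i).T) := by
        apply (Subgroup.closure_le _).mpr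
        rintro - ⟨j, rfl⟩
        rcases hFcases i j with h | ⟨l, h⟩
        · rw [h]; exact one_mem _
        · rw [h]; exact Subgroup.subset_closure (mem_range_self _)
      exact ⟨δ, hδ, fun h hh => hb h (hle hh)⟩
    obtain ⟨Sstar, xs, e, hminS, hdistS, hcont, hinj, hex, hcube, hclause⟩ :=
      master F hFcomm hFdist (fun i => x' i)
    refine ⟨Sstar, hminS, hdistS, ?_, xs,
      e ⁻¹' (Set.pi univ (fun i => U' i)),
      (isOpen_set_pi finite_univ (fun i _ => hUopen' i)).preimage hcont, ?_, ?_⟩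
    · -- HasUCP
      intro q hq q' hq' ε₀ hagree
      funext ε
      by_cases hε : ε = ε₀
      · subst hε
        apply hinj
        funext i
        set ε₁ : Fin (d+2) → Bool := fun j => if j = i then !(ε j) else ε j with hε₁
        have hne : ε₁ ≠ ε := by
          intro hcon
          have h7 := congrFun hcon i
          simp only [hε₁, if_pos rfl] at h7
          exact (Bool.not_ne_self (ε i)) h7
        have hcond : ∀ j, ε j ≠ ε₁ j → F i j = 1 := by
          intro j hj
          by_cases h : j = i
          · rw [h, hFsame]
          · exfalso
            apply hj
            simp only [hε₁, if_neg h]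
        have h1 := hclause q hq i ε ε₁ hcond
        have h2 := hclause q' hq' i ε ε₁ hcond
        rw [h1, h2, hagree ε₁ hne]
      · rw [hagree ε hε]
    · -- the point is in the open set
      rw [mem_preimage, hex]
      intro i _
      exact hxU' i
    · -- return times are contained in the joining, hence in B
      intro n hn
      apply hjoin
      intro i
      rw [hBieq i]
      show cubeMap (S' i).T (fun l => n (i.succAbove l)) (fun _ => true) (x' i) ∈ U' i
      have h1 : e (cubeMap Sstar.T n (fun _ => true) xs) ∈ Set.pi univ (fun i => U' i) := hn
      have h2 := h1 i (mem_univ i)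
      rw [hcube] at h2
      rw [show e xs i = x' i from congrFun hex i] at h2
      rw [cubeMap_succAbove' (F i) n (fun _ => true) i (hFsame i)] at h2
      have h3 : (F i) ∘ i.succAbove = (S' i).T := funext (hFsucc i)
      rw [h3] at h2
      exact h2
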